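/- Let Θ1, x be bounded operators with x invertible, [Θ1, x x†] = 0, and suppose Θ2 := x⁻¹ Θ1 x equals Θ1†. Then x commutes with Θ1 + Θ1†, and likewise x† commutes with Θ1 + Θ1†. -/

import Mathlib

open ContinuousLinearMap

theorem x_commutes_with_sum_of_Theta1_and_adjoint
    {H : Type*} [NormedAddCommGroup H] [InnerProductSpace ℂ H] [CompleteSpace H]
    (Θ1 x xinv : H →L[ℂ] H)
    (hinv1 : x ∘L xinv = 1) (hinv2 : xinv ∘L x = 1)
    (hcomm : Θ1 ∘L (x ∘L ContinuousLinearMap.adjoint x)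
      = (x ∘L ContinuousLinearMap.adjoint x) ∘L Θ1)
    (hΘ2 : xinv ∘L Θ1 ∘L x = ContinuousLinearMap.adjoint Θ1) :
    x ∘L (Θ1 + ContinuousLinearMap.adjoint Θ1)
        = (Θ1 + ContinuousLinearMap.adjoint Θ1) ∘L x
      ∧ ContinuousLinearMap.adjoint x ∘L (Θ1 + ContinuousLinearMap.adjoint Θ1)
        = (Θ1 + ContinuousLinearMap.adjoint Θ1) ∘L ContinuousLinearMap.adjoint x := by
  -- hA : x ∘ Θ1† = Θ1 ∘ x
  have hA : x ∘L adjoint Θ1 = Θ1 ∘L x := by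
    have := congrArg (fun T => x ∘L T) hΘ2
    simpa [← comp_assoc, hinv1, one_def, id_comp] using this.symm
  -- hB : Θ1 ∘ x† = x† ∘ Θ1†  (adjoint of hA)
  have hB : Θ1 ∘L adjoint x = adjoint x ∘L adjoint Θ1 := by
    have := congrArg ContinuousLinearMap.adjoint hA
    simpa [adjoint_comp, adjoint_adjoint] using this
  -- hC : Θ1† ∘ x† = x† ∘ Θ1
  have hC : adjoint Θ1 ∘L adjoint x = adjoint x ∘L Θ1 := by
    have h1 : x ∘L (adjoint Θ1 ∘L adjoint x) = x ∘L (adjoint x ∘L Θ1) := by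
      calc x ∘L (adjoint Θ1 ∘L adjoint x) = (x ∘L adjoint Θ1) ∘L adjoint x := by
            rw [comp_assoc]
        _ = (Θ1 ∘L x) ∘L adjoint x := by rw [hA]
        _ = Θ1 ∘L (x ∘L adjoint x) := by rw [comp_assoc]
        _ = (x ∘L adjoint x) ∘L Θ1 := hcomm
        _ = x ∘L (adjoint x ∘L Θ1) := by rw [comp_assoc]
    have := congrArg (fun T => xinv ∘L T) h1
    simpa [← comp_assoc, hinv2, one_def, id_comp] using this
  -- hD : x ∘ Θ1 = Θ1† ∘ x  (adjoint of hC)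
  have hD : x ∘L Θ1 = adjoint Θ1 ∘L x := by
    have := congrArg ContinuousLinearMap.adjoint hC
    simpa [adjoint_comp, adjoint_adjoint] using this
  constructor
  · rw [comp_add, add_comp, hA, hD, add_comm]
  · rw [comp_add, add_comp, ← hB, ← hC, add_comm]
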